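/- Let X ~ Binomial(n, p) with p ≤ 1/2 and np sufficiently large. Then Pr[X ≤ np − √(np)] = Ω(1); i.e., there is a universal constant c > 0 such that Pr[X ≤ np − √(np)] ≥ c. -/

import Mathlib

open Finset

private lemma castD2 (k : ℕ) : ((k.descFactorial 2 : ℕ) : ℝ) = k * (k - 1) := by
  rcases k with _ | j
  · simp
  · simp only [Nat.descFactorial_succ, Nat.descFactorial_one, Nat.descFactorial_zero]
    push_cast
    ring

private lemma castD3 (k : ℕ) : ((k.descFactorial 3 : ℕ) : ℝ) = k * (k - 1) * (k - 2) := by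
  rcases k with _ | _ | j
  · simp
  · norm_num [Nat.descFactorial]
  · simp only [Nat.descFactorial_succ, Nat.descFactorial_one, Nat.descFactorial_zero]
    push_cast
    ring

private lemma castD4 (k : ℕ) : ((k.descFactorial 4 : ℕ) : ℝ) = k * (k - 1) * (k - 2) * (k - 3) := by
  rcases k with _ | _ | _ | j
  · simp
  · norm_num [Nat.descFactorial]
  · norm_num [Nat.descFactorial]
  · simp only [Nat.descFactorial_succ, Nat.descFactorial_one, Nat.descFactorial_zero]
    push_cast
    ring

private lemma factmom (p q : ℝ) : ∀ (r n : ℕ),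
    ∑ k ∈ range (n+1), (n.choose k : ℝ) * (k.descFactorial r : ℝ) * p ^ k * q ^ (n - k)
      = (n.descFactorial r : ℝ) * p ^ r * (p + q) ^ (n - r) := by
  intro r
  induction r with
  | zero =>
    intro n
    rw [add_pow]
    simp only [Nat.descFactorial_zero, Nat.cast_one, mul_one, pow_zero, one_mul, Nat.sub_zero]
    exact Finset.sum_congr rfl fun k _ => by ring
  | succ r ih =>
    intro n
    rcases n with _ | m
    · simp
    · rw [Finset.sum_range_succ']
      have h0 : ((m+1).choose 0 : ℝ) * ((0:ℕ).descFactorial (r+1) : ℝ) * p ^ 0 *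
          q ^ (m + 1 - 0) = 0 := by simp
      rw [h0, add_zero]
      have hterm : ∀ i ∈ range (m + 1),
          ((m+1).choose (i+1) : ℝ) * ((i+1).descFactorial (r+1) : ℝ) * p ^ (i+1) *
            q ^ (m + 1 - (i+1)) =
          ((m+1) * p) * ((m.choose i : ℝ) * (i.descFactorial r : ℝ) * p ^ i * q ^ (m - i)) := by
        intro i _
        have h1 : (i+1).descFactorial (r+1) = (i+1) * i.descFactorial r :=
          Nat.succ_descFactorial_succ i r
        have h2 : ((m+1) * m.choose i : ℝ) = ((m+1).choose (i+1) : ℝ) * (i+1) := by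
          exact_mod_cast congrArg (Nat.cast (R := ℝ)) (Nat.add_one_mul_choose_eq m i)
        have h3 : m + 1 - (i + 1) = m - i := by omega
        rw [h1, h3]
        push_cast
        linear_combination (-((i.descFactorial r : ℝ) * p ^ (i+1) * q ^ (m - i))) * h2
      rw [Finset.sum_congr rfl hterm, ← Finset.mul_sum, ih m,
        Nat.succ_descFactorial_succ m r]
      have h4 : m + 1 - (r + 1) = m - r := by omega
      rw [h4]
      push_cast
      ring
private lemma M0 (p q : ℝ) (hpq : p + q = 1) (n : ℕ) :
    ∑ k ∈ range (n+1), (n.choose k : ℝ) * p ^ k * q ^ (n - k) = 1 := by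
  have h := factmom p q 0 n
  rw [hpq, one_pow] at h
  simp only [Nat.descFactorial_zero, Nat.cast_one, pow_zero, one_mul, mul_one] at h
  rw [← h]

private lemma M1 (p q : ℝ) (hpq : p + q = 1) (n : ℕ) :
    ∑ k ∈ range (n+1), (n.choose k : ℝ) * p ^ k * q ^ (n - k) * k = n * p := by
  have h := factmom p q 1 n
  rw [hpq, one_pow, mul_one] at h
  simp only [Nat.descFactorial_one, pow_one] at h
  rw [← h]
  exact sum_congr rfl fun k _ => by ring

private lemma M2 (p q : ℝ) (hpq : p + q = 1) (n : ℕ) :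
    ∑ k ∈ range (n+1), (n.choose k : ℝ) * p ^ k * q ^ (n - k) * ((k:ℝ) * (k - 1))
      = n * (n - 1) * p ^ 2 := by
  have h := factmom p q 2 n
  rw [hpq, one_pow, mul_one, castD2 n] at h
  rw [← h]
  exact sum_congr rfl fun k _ => by rw [castD2 k]; ring

private lemma M3 (p q : ℝ) (hpq : p + q = 1) (n : ℕ) :
    ∑ k ∈ range (n+1), (n.choose k : ℝ) * p ^ k * q ^ (n - k) * ((k:ℝ) * (k - 1) * (k - 2))
      = n * (n - 1) * (n - 2) * p ^ 3 := by
  have h := factmom p q 3 n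
  rw [hpq, one_pow, mul_one, castD3 n] at h
  rw [← h]
  exact sum_congr rfl fun k _ => by rw [castD3 k]; ring

private lemma M4 (p q : ℝ) (hpq : p + q = 1) (n : ℕ) :
    ∑ k ∈ range (n+1), (n.choose k : ℝ) * p ^ k * q ^ (n - k) * ((k:ℝ) * (k - 1) * (k - 2) * (k - 3))
      = n * (n - 1) * (n - 2) * (n - 3) * p ^ 4 := by
  have h := factmom p q 4 n
  rw [hpq, one_pow, mul_one, castD4 n] at h
  rw [← h]
  exact sum_congr rfl fun k _ => by rw [castD4 k]; ring
private lemma mu2 (p q : ℝ) (hpq : p + q = 1) (n : ℕ) :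
    ∑ k ∈ range (n+1), (n.choose k : ℝ) * p ^ k * q ^ (n - k) * ((n:ℝ)*p - k)^2
      = n*p*q := by
  have key : ∀ k ∈ range (n+1), (n.choose k : ℝ) * p ^ k * q ^ (n - k) * ((n:ℝ)*p - k)^2 =
      ((n:ℝ)*p)^2 * ((n.choose k : ℝ) * p ^ k * q ^ (n - k))
      + (1 - 2*((n:ℝ)*p)) * ((n.choose k : ℝ) * p ^ k * q ^ (n - k) * k)
      + ((n.choose k : ℝ) * p ^ k * q ^ (n - k) * ((k:ℝ)*(k-1))) := fun k _ => by ring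
  rw [sum_congr rfl key, sum_add_distrib, sum_add_distrib, ← mul_sum, ← mul_sum,
    M0 p q hpq, M1 p q hpq, M2 p q hpq]
  have hq : q = 1 - p := by linarith
  subst hq; ring

private lemma mu4 (p q : ℝ) (hpq : p + q = 1) (n : ℕ) :
    ∑ k ∈ range (n+1), (n.choose k : ℝ) * p ^ k * q ^ (n - k) * ((n:ℝ)*p - k)^4
      = n*p*q*(1 - 6*p*q) + 3*(n*p*q)^2 := by
  have key : ∀ k ∈ range (n+1), (n.choose k : ℝ) * p ^ k * q ^ (n - k) * ((n:ℝ)*p - k)^4 =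
      ((n:ℝ)*p)^4 * ((n.choose k : ℝ) * p ^ k * q ^ (n - k))
      + (-4*((n:ℝ)*p)^3 + 6*((n:ℝ)*p)^2 - 4*((n:ℝ)*p) + 1) *
          ((n.choose k : ℝ) * p ^ k * q ^ (n - k) * k)
      + (6*((n:ℝ)*p)^2 - 12*((n:ℝ)*p) + 7) *
          ((n.choose k : ℝ) * p ^ k * q ^ (n - k) * ((k:ℝ)*(k-1)))
      + (-4*((n:ℝ)*p) + 6) *
          ((n.choose k : ℝ) * p ^ k * q ^ (n - k) * ((k:ℝ)*(k-1)*(k-2)))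
      + ((n.choose k : ℝ) * p ^ k * q ^ (n - k) * ((k:ℝ)*(k-1)*(k-2)*(k-3))) := fun k _ => by ring
  rw [sum_congr rfl key, sum_add_distrib, sum_add_distrib, sum_add_distrib, sum_add_distrib,
    ← mul_sum, ← mul_sum, ← mul_sum, ← mul_sum,
    M0 p q hpq, M1 p q hpq, M2 p q hpq, M3 p q hpq, M4 p q hpq]
  have hq : q = 1 - p := by linarith
  subst hq; ring
open scoped Classical in
private lemma abstract_base (s : Finset ℕ) (w : ℕ → ℝ) (f : ℕ → ℝ) (v : ℝ)
    (hw : ∀ k ∈ s, 0 ≤ w k) (h0 : ∑ k ∈ s, w k = 1) (h1 : ∑ k ∈ s, w k * f k = 0)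
    (h2 : ∑ k ∈ s, w k * f k ^ 2 = v) (h4 : ∑ k ∈ s, w k * f k ^ 4 ≤ 4 * v ^ 2)
    (hv : 1 ≤ v) :
    1 / 64 ≤ ∑ k ∈ s.filter (fun k => Real.sqrt v / 8 ≤ f k), w k := by
  classical
  set σ : ℝ := Real.sqrt v with hsdef
  have hv0 : (0:ℝ) < v := by linarith
  have hσ2 : σ ^ 2 = v := Real.sq_sqrt hv0.le
  have hσ0 : 0 < σ := Real.sqrt_pos.mpr hv0
  have hσ1 : 1 ≤ σ := by nlinarith
  -- Cauchy–Schwarz 1 : v^2 ≤ (∑ w|f|) * (∑ w|f|^3)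
  have cs1 := Finset.sum_mul_sq_le_sq_mul_sq s
    (fun k => Real.sqrt (w k * |f k|)) (fun k => Real.sqrt (w k * |f k| ^ 3))
  have e1 : ∀ k ∈ s, Real.sqrt (w k * |f k|) * Real.sqrt (w k * |f k| ^ 3)
      = w k * f k ^ 2 := by
    intro k hk
    rw [← Real.sqrt_mul (mul_nonneg (hw k hk) (abs_nonneg _))]
    have hx : w k * |f k| * (w k * |f k| ^ 3) = (w k * f k ^ 2) ^ 2 := by
      rw [← sq_abs (f k)]; ring
    rw [hx, Real.sqrt_sq (mul_nonneg (hw k hk) (sq_nonneg _))]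
  have e2 : ∀ k ∈ s, (Real.sqrt (w k * |f k|)) ^ 2 = w k * |f k| := by
    intro k hk; exact Real.sq_sqrt (mul_nonneg (hw k hk) (abs_nonneg _))
  have e3 : ∀ k ∈ s, (Real.sqrt (w k * |f k| ^ 3)) ^ 2 = w k * |f k| ^ 3 := by
    intro k hk; exact Real.sq_sqrt (mul_nonneg (hw k hk) (by positivity))
  rw [sum_congr rfl e1, sum_congr rfl e2, sum_congr rfl e3, h2] at cs1
  -- Cauchy–Schwarz 2 : (∑ w|f|^3)^2 ≤ v * (∑ w f^4)
  have cs2 := Finset.sum_mul_sq_le_sq_mul_sq s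
    (fun k => Real.sqrt (w k * f k ^ 2)) (fun k => Real.sqrt (w k * f k ^ 4))
  have e4 : ∀ k ∈ s, Real.sqrt (w k * f k ^ 2) * Real.sqrt (w k * f k ^ 4)
      = w k * |f k| ^ 3 := by
    intro k hk
    rw [← Real.sqrt_mul (mul_nonneg (hw k hk) (sq_nonneg _))]
    have habs4 : |f k| ^ 4 = f k ^ 4 := by
      rw [← abs_pow]; exact abs_of_nonneg (by positivity)
    have hx : w k * f k ^ 2 * (w k * f k ^ 4) = (w k * |f k| ^ 3) ^ 2 := by
      rw [← sq_abs (f k), ← habs4]; ring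
    rw [hx, Real.sqrt_sq (mul_nonneg (hw k hk) (pow_nonneg (abs_nonneg _) 3))]
  have e5 : ∀ k ∈ s, (Real.sqrt (w k * f k ^ 2)) ^ 2 = w k * f k ^ 2 := by
    intro k hk; exact Real.sq_sqrt (mul_nonneg (hw k hk) (sq_nonneg _))
  have e6 : ∀ k ∈ s, (Real.sqrt (w k * f k ^ 4)) ^ 2 = w k * f k ^ 4 := by
    intro k hk; exact Real.sq_sqrt (mul_nonneg (hw k hk) (by positivity))
  rw [sum_congr rfl e4, sum_congr rfl e5, sum_congr rfl e6, h2] at cs2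
  have hC3nn : 0 ≤ ∑ k ∈ s, w k * |f k| ^ 3 :=
    Finset.sum_nonneg fun k hk => mul_nonneg (hw k hk) (by positivity)
  have hAnn : 0 ≤ ∑ k ∈ s, w k * |f k| :=
    Finset.sum_nonneg fun k hk => mul_nonneg (hw k hk) (abs_nonneg _)
  have hC4nn : 0 ≤ ∑ k ∈ s, w k * f k ^ 4 :=
    Finset.sum_nonneg fun k hk => mul_nonneg (hw k hk) (by positivity)
  -- C3 ≤ 2 σ^3
  have hσ6 : σ ^ 6 = v ^ 3 := by rw [← hσ2]; ring
  have hσ4 : σ ^ 4 = v ^ 2 := by rw [← hσ2]; ring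
  have hC3le : ∑ k ∈ s, w k * |f k| ^ 3 ≤ 2 * σ ^ 3 := by
    have h5 := mul_le_mul_of_nonneg_left h4 hv0.le
    nlinarith [cs2, hC3nn, pow_pos hσ0 3, hσ6, h5]
  -- A ≥ σ / 2
  have hA : σ / 2 ≤ ∑ k ∈ s, w k * |f k| := by
    have hmul := mul_le_mul_of_nonneg_left hC3le hAnn
    nlinarith [cs1, hmul, pow_pos hσ0 3, hσ4, hσ0]
  -- positive part sum
  have hP : ∑ k ∈ s, w k * max (f k) 0 = (∑ k ∈ s, w k * |f k|) / 2 := by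
    have key : ∀ k ∈ s, w k * max (f k) 0 = (w k * |f k| + w k * f k) / 2 := by
      intro k _
      rcases le_total (f k) 0 with h | h
      · rw [max_eq_right h, abs_of_nonpos h]; ring
      · rw [max_eq_left h, abs_of_nonneg h]; ring
    rw [sum_congr rfl key, ← sum_div, sum_add_distrib, h1, add_zero]
  -- tail sum of w * f is at least σ/8
  have split := Finset.sum_filter_add_sum_filter_not s (fun k => σ / 8 ≤ f k)
    (fun k => w k * max (f k) 0)
  have hTeq : ∑ k ∈ s.filter (fun k => σ / 8 ≤ f k), w k * max (f k) 0
      = ∑ k ∈ s.filter (fun k => σ / 8 ≤ f k), w k * f k := by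
    refine sum_congr rfl fun k hk => ?_
    have hm := (mem_filter.mp hk).2
    rw [max_eq_left (le_trans (by positivity) hm)]
  have hnot : ∑ k ∈ s.filter (fun k => ¬ σ / 8 ≤ f k), w k * max (f k) 0 ≤ σ / 8 := by
    have step1 : ∑ k ∈ s.filter (fun k => ¬ σ / 8 ≤ f k), w k * max (f k) 0
        ≤ ∑ k ∈ s.filter (fun k => ¬ σ / 8 ≤ f k), w k * (σ / 8) := by
      refine sum_le_sum fun k hk => ?_
      obtain ⟨hks, hm⟩ := mem_filter.mp hk
      push_neg at hm
      exact mul_le_mul_of_nonneg_left (max_le hm.le (by positivity)) (hw k hks)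
    have step2 : ∑ k ∈ s.filter (fun k => ¬ σ / 8 ≤ f k), w k * (σ / 8)
        ≤ σ / 8 := by
      rw [← sum_mul]
      have hsub : ∑ k ∈ s.filter (fun k => ¬ σ / 8 ≤ f k), w k ≤ 1 := by
        rw [← h0]
        exact sum_le_sum_of_subset_of_nonneg (filter_subset _ _) fun k hk _ => hw k hk
      have hnn : (0:ℝ) ≤ ∑ k ∈ s.filter (fun k => ¬ σ / 8 ≤ f k), w k :=
        Finset.sum_nonneg fun k hk => hw k (mem_filter.mp hk).1
      nlinarith [hnn, hσ0, hsub]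
    linarith
  have hT1 : σ / 8 ≤ ∑ k ∈ s.filter (fun k => σ / 8 ≤ f k), w k * f k := by
    have := hP
    rw [← split, hTeq] at this
    linarith
  -- Cauchy–Schwarz 3 on the tail set T
  set T := s.filter (fun k => σ / 8 ≤ f k) with hTdef
  have cs3 := Finset.sum_mul_sq_le_sq_mul_sq T
    (fun k => Real.sqrt (w k)) (fun k => Real.sqrt (w k * f k ^ 2))
  have e7 : ∀ k ∈ T, Real.sqrt (w k) * Real.sqrt (w k * f k ^ 2) = w k * f k := by
    intro k hk
    obtain ⟨hks, hm⟩ := mem_filter.mp hk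
    rw [← Real.sqrt_mul (hw k hks)]
    have hf0 : 0 ≤ f k := le_trans (by positivity) hm
    have hx : w k * (w k * f k ^ 2) = (w k * f k) ^ 2 := by ring
    rw [hx, Real.sqrt_sq (mul_nonneg (hw k hks) hf0)]
  have e8 : ∀ k ∈ T, (Real.sqrt (w k)) ^ 2 = w k := by
    intro k hk; exact Real.sq_sqrt (hw k (mem_filter.mp hk).1)
  have e9 : ∀ k ∈ T, (Real.sqrt (w k * f k ^ 2)) ^ 2 = w k * f k ^ 2 := by
    intro k hk; exact Real.sq_sqrt (mul_nonneg (hw k (mem_filter.mp hk).1) (sq_nonneg _))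
  rw [sum_congr rfl e7, sum_congr rfl e8, sum_congr rfl e9] at cs3
  have hTf2 : ∑ k ∈ T, w k * f k ^ 2 ≤ v := by
    rw [← h2]
    exact sum_le_sum_of_subset_of_nonneg (filter_subset _ _)
      fun k hk _ => mul_nonneg (hw k hk) (sq_nonneg _)
  have hTwnn : 0 ≤ ∑ k ∈ T, w k :=
    Finset.sum_nonneg fun k hk => hw k (mem_filter.mp hk).1
  have hTf2nn : 0 ≤ ∑ k ∈ T, w k * f k ^ 2 :=
    Finset.sum_nonneg fun k hk => mul_nonneg (hw k (mem_filter.mp hk).1) (sq_nonneg _)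
  nlinarith [cs3, hT1, hTf2, hTwnn, hσ0, hσ2, hTf2nn, hv0, mul_le_mul_of_nonneg_left hTf2 hTwnn]
open scoped Classical in
private lemma conv (p q : ℝ) (hp : 0 ≤ p) (hq : 0 ≤ q) (n₁ n₂ : ℕ) (t₁ t₂ : ℝ) :
    (∑ i ∈ (range (n₁+1)).filter (fun i : ℕ => (i:ℝ) ≤ t₁),
        (n₁.choose i : ℝ) * p ^ i * q ^ (n₁ - i)) *
    (∑ j ∈ (range (n₂+1)).filter (fun j : ℕ => (j:ℝ) ≤ t₂),
        (n₂.choose j : ℝ) * p ^ j * q ^ (n₂ - j))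
    ≤ ∑ k ∈ (range (n₁+n₂+1)).filter (fun k : ℕ => (k:ℝ) ≤ t₁+t₂),
        ((n₁+n₂).choose k : ℝ) * p ^ k * q ^ (n₁+n₂-k) := by
  classical
  set F : ℕ × ℕ → ℝ := fun ij =>
    (n₁.choose ij.1 : ℝ) * (n₂.choose ij.2 : ℝ) * p ^ (ij.1 + ij.2) * q ^ (n₁ + n₂ - (ij.1 + ij.2))
    with hF
  set S := (range (n₁+n₂+1)).filter (fun k : ℕ => (k:ℝ) ≤ t₁+t₂) with hS
  have hFnn : ∀ ij, 0 ≤ F ij := by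
    intro ij
    simp only [hF]
    positivity
  -- RHS equals sum of F over the biUnion of antidiagonals
  have hdisj : (↑S : Set ℕ).PairwiseDisjoint Finset.HasAntidiagonal.antidiagonal := by
    intro a _ b _ hab
    simp only [Function.onFun, Finset.disjoint_left]
    intro x hxa hxb
    rw [Finset.HasAntidiagonal.mem_antidiagonal] at hxa hxb
    exact hab (by omega)
  have hrhs : ∑ k ∈ S, ((n₁+n₂).choose k : ℝ) * p ^ k * q ^ (n₁+n₂-k)
      = ∑ ij ∈ S.biUnion Finset.HasAntidiagonal.antidiagonal, F ij := by
    rw [Finset.sum_biUnion hdisj]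
    refine Finset.sum_congr rfl fun k _ => ?_
    have hinner : ∀ ij ∈ Finset.HasAntidiagonal.antidiagonal k, F ij
        = (n₁.choose ij.1 : ℝ) * (n₂.choose ij.2 : ℝ) * p ^ k * q ^ (n₁ + n₂ - k) := by
      intro ij hij
      rw [Finset.HasAntidiagonal.mem_antidiagonal] at hij
      simp only [hF, hij]
    rw [Finset.sum_congr rfl hinner, Nat.add_choose_eq]
    push_cast
    rw [Finset.sum_mul, Finset.sum_mul]
  -- LHS equals sum of F over the product set
  have hlhs : (∑ i ∈ (range (n₁+1)).filter (fun i : ℕ => (i:ℝ) ≤ t₁),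
        (n₁.choose i : ℝ) * p ^ i * q ^ (n₁ - i)) *
      (∑ j ∈ (range (n₂+1)).filter (fun j : ℕ => (j:ℝ) ≤ t₂),
        (n₂.choose j : ℝ) * p ^ j * q ^ (n₂ - j))
      = ∑ ij ∈ ((range (n₁+1)).filter (fun i : ℕ => (i:ℝ) ≤ t₁)) ×ˢ
          ((range (n₂+1)).filter (fun j : ℕ => (j:ℝ) ≤ t₂)), F ij := by
    rw [Finset.sum_mul_sum]
    rw [Finset.sum_product]
    refine Finset.sum_congr rfl fun i hi => Finset.sum_congr rfl fun j hj => ?_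
    have hi' : i ≤ n₁ := by
      have := (Finset.mem_filter.mp hi).1
      rw [Finset.mem_range] at this; omega
    have hj' : j ≤ n₂ := by
      have := (Finset.mem_filter.mp hj).1
      rw [Finset.mem_range] at this; omega
    have hexp : n₁ - i + (n₂ - j) = n₁ + n₂ - (i + j) := by omega
    simp only [hF]
    rw [← hexp, pow_add p i j, pow_add q (n₁ - i) (n₂ - j)]
    ring
  rw [hlhs, hrhs]
  refine Finset.sum_le_sum_of_subset_of_nonneg ?_ fun ij _ _ => hFnn ij
  intro ij hij
  obtain ⟨hi, hj⟩ := Finset.mem_product.mp hij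
  obtain ⟨hi1, hi2⟩ := Finset.mem_filter.mp hi
  obtain ⟨hj1, hj2⟩ := Finset.mem_filter.mp hj
  rw [Finset.mem_range] at hi1 hj1
  refine Finset.mem_biUnion.mpr ⟨ij.1 + ij.2, ?_, ?_⟩
  · rw [hS, Finset.mem_filter, Finset.mem_range]
    constructor
    · omega
    · push_cast; linarith
  · exact Finset.HasAntidiagonal.mem_antidiagonal.mpr rfl
open scoped Classical in
private lemma iterlem (p q : ℝ) (hp : 0 ≤ p) (hq : 0 ≤ q) (c s : ℝ) (hc : 0 ≤ c) :
    ∀ L : List ℕ,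
      (∀ a ∈ L, c ≤ ∑ k ∈ (range (a+1)).filter (fun k : ℕ => (k:ℝ) ≤ (a:ℝ) * p - s),
          (a.choose k : ℝ) * p ^ k * q ^ (a - k)) →
      c ^ L.length ≤ ∑ k ∈ (range (L.sum+1)).filter
          (fun k : ℕ => (k:ℝ) ≤ (L.sum : ℝ) * p - (L.length : ℝ) * s),
        ((L.sum).choose k : ℝ) * p ^ k * q ^ (L.sum - k) := by
  intro L
  induction L with
  | nil =>
    intro _
    have hfil : (range (List.sum ([]:List ℕ) + 1)).filter
        (fun k : ℕ => (k:ℝ) ≤ ((List.sum ([]:List ℕ) : ℕ) : ℝ) * p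
          - ((List.length ([]:List ℕ) : ℕ) : ℝ) * s) = {0} := by
      ext k
      simp only [mem_filter, mem_range, mem_singleton, List.sum_nil, List.length_nil]
      constructor
      · intro h; simp_all
      · rintro rfl; norm_num
    rw [hfil]
    simp
  | cons a L ih =>
    intro hL
    have h1 : c ≤ ∑ k ∈ (range (a+1)).filter (fun k : ℕ => (k:ℝ) ≤ (a:ℝ) * p - s),
        (a.choose k : ℝ) * p ^ k * q ^ (a - k) := hL a List.mem_cons_self
    have h2 := ih (fun b hb => hL b (List.mem_cons_of_mem a hb))
    have hT2nn : (0:ℝ) ≤ ∑ k ∈ (range (L.sum+1)).filter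
        (fun k : ℕ => (k:ℝ) ≤ (L.sum : ℝ) * p - (L.length : ℝ) * s),
        ((L.sum).choose k : ℝ) * p ^ k * q ^ (L.sum - k) :=
      Finset.sum_nonneg fun k _ => by positivity
    have hcpow : (0:ℝ) ≤ c ^ L.length := pow_nonneg hc _
    have step1 : c ^ (a :: L).length ≤
        (∑ k ∈ (range (a+1)).filter (fun k : ℕ => (k:ℝ) ≤ (a:ℝ) * p - s),
          (a.choose k : ℝ) * p ^ k * q ^ (a - k)) *
        (∑ k ∈ (range (L.sum+1)).filter
          (fun k : ℕ => (k:ℝ) ≤ (L.sum : ℝ) * p - (L.length : ℝ) * s),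
          ((L.sum).choose k : ℝ) * p ^ k * q ^ (L.sum - k)) := by
      rw [List.length_cons, pow_succ, mul_comm (c ^ L.length) c]
      exact mul_le_mul h1 h2 hcpow (le_trans hc h1)
    have step2 := conv p q hp hq a L.sum ((a:ℝ) * p - s)
      ((L.sum : ℝ) * p - (L.length : ℝ) * s)
    have heq : ((a:ℝ) * p - s) + ((L.sum : ℝ) * p - (L.length : ℝ) * s)
        = ((a :: L).sum : ℝ) * p - ((a :: L).length : ℝ) * s := by
      simp only [List.sum_cons, List.length_cons]
      push_cast
      ring
    rw [heq] at step2
    have hsum : (a :: L).sum = a + L.sum := List.sum_cons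
    rw [hsum]
    exact le_trans step1 step2

open scoped Classical in
private lemma base (p q : ℝ) (hp : 0 ≤ p) (hq : 0 ≤ q) (hpq : p + q = 1)
    (n : ℕ) (hv : 1 ≤ (n:ℝ) * p * q) :
    1 / 64 ≤ ∑ k ∈ (range (n+1)).filter
        (fun k : ℕ => (k:ℝ) ≤ (n:ℝ) * p - Real.sqrt ((n:ℝ) * p * q) / 8),
      (n.choose k : ℝ) * p ^ k * q ^ (n - k) := by
  have h1 : ∑ k ∈ range (n+1), (n.choose k : ℝ) * p ^ k * q ^ (n - k) * ((n:ℝ)*p - k) = 0 := by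
    have key : ∀ k ∈ range (n+1), (n.choose k : ℝ) * p ^ k * q ^ (n - k) * ((n:ℝ)*p - k)
        = ((n:ℝ)*p) * ((n.choose k : ℝ) * p ^ k * q ^ (n - k))
          - ((n.choose k : ℝ) * p ^ k * q ^ (n - k) * k) := fun k _ => by ring
    rw [sum_congr rfl key, sum_sub_distrib, ← mul_sum, M0 p q hpq, M1 p q hpq]
    ring
  have h4 : ∑ k ∈ range (n+1), (n.choose k : ℝ) * p ^ k * q ^ (n - k) * ((n:ℝ)*p - k) ^ 4
      ≤ 4 * ((n:ℝ)*p*q) ^ 2 := by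
    rw [mu4 p q hpq n]
    nlinarith [mul_nonneg hp hq, hv, mul_nonneg (mul_nonneg (Nat.cast_nonneg n) hp) hq]
  have habs := abstract_base (range (n+1))
    (fun k => (n.choose k : ℝ) * p ^ k * q ^ (n - k))
    (fun k => (n:ℝ) * p - k) ((n:ℝ) * p * q)
    (fun k _ => by positivity) (M0 p q hpq n) h1 (mu2 p q hpq n) h4 hv
  have hfil : (range (n+1)).filter
        (fun k : ℕ => Real.sqrt ((n:ℝ)*p*q) / 8 ≤ (n:ℝ)*p - k)
      = (range (n+1)).filter
        (fun k : ℕ => (k:ℝ) ≤ (n:ℝ)*p - Real.sqrt ((n:ℝ)*p*q) / 8) := by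
    refine filter_congr fun k _ => ?_
    constructor <;> intro h <;> linarith
  rw [hfil] at habs
  exact habs

open scoped Classical in
/-- For X ~ Binomial(n,p) with `p ≤ 1/2` and `np` sufficiently large,
`Pr[X ≤ np − √(np)] ≥ c` for a universal constant `c > 0`. -/
theorem stmt_2 :
    ∃ c : ℝ, 0 < c ∧ ∃ M : ℝ, ∀ (n : ℕ) (p : ℝ),
      0 ≤ p → p ≤ 1 / 2 → M ≤ (n : ℝ) * p →
      c ≤ ∑ k ∈ (range (n + 1)).filter
            (fun k : ℕ => (k : ℝ) ≤ (n : ℝ) * p - Real.sqrt ((n : ℝ) * p)),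
          (n.choose k : ℝ) * p ^ k * (1 - p) ^ (n - k) := by
  refine ⟨(1/64:ℝ) ^ 1024, by positivity, 4096, ?_⟩
  intro n p hp hp2 hM
  set q : ℝ := 1 - p with hqdef
  have hq0 : 0 ≤ q := by rw [hqdef]; linarith
  have hq2 : 1/2 ≤ q := by rw [hqdef]; linarith
  have hpq : p + q = 1 := by rw [hqdef]; ring
  have hnn : (0:ℝ) ≤ (n:ℝ) := Nat.cast_nonneg n
  have hn : (8192:ℝ) ≤ (n:ℝ) := by nlinarith
  set d := n / 1024 with hd
  set r := n % 1024 with hr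
  have hdr : 1024 * d + r = n := Nat.div_add_mod n 1024
  have hrlt : r < 1024 := Nat.mod_lt n (by norm_num)
  set L : List ℕ := List.replicate (1024 - r) d ++ List.replicate r (d+1) with hL
  have hlen : L.length = 1024 := by
    rw [hL, List.length_append, List.length_replicate, List.length_replicate]; omega
  have hsum : L.sum = n := by
    have key : (1024 - r) * d + r * (d + 1) = 1024 * d + r := by
      obtain ⟨c, hc⟩ := Nat.exists_eq_add_of_le hrlt.le
      rw [hc, Nat.add_sub_cancel_left]
      ring
    rw [hL]
    simp only [List.sum_append, List.sum_replicate, smul_eq_mul]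
    omega
  have hdlb : (n:ℝ) / 2048 ≤ (d:ℝ) := by
    have h1 : (1024:ℝ) * (d:ℝ) + (r:ℝ) = (n:ℝ) := by exact_mod_cast hdr
    have h2 : (r:ℝ) ≤ 1023 := by exact_mod_cast Nat.lt_succ_iff.mp hrlt
    nlinarith
  set s : ℝ := Real.sqrt ((n:ℝ)*p) / 1024 with hs
  have hchunk : ∀ a ∈ L, (1:ℝ)/64 ≤ ∑ k ∈ (range (a+1)).filter
      (fun k : ℕ => (k:ℝ) ≤ (a:ℝ)*p - s), (a.choose k :ℝ) * p^k * q^(a-k) := by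
    intro a ha
    have halb : (n:ℝ)/2048 ≤ (a:ℝ) := by
      rw [hL] at ha
      rcases List.mem_append.mp ha with h | h
      · rw [List.eq_of_mem_replicate h]; exact hdlb
      · rw [List.eq_of_mem_replicate h]; push_cast; linarith
    have hnp0 : (0:ℝ) ≤ (n:ℝ)*p := mul_nonneg hnn hp
    have h1 : (n:ℝ)/2048 * p ≤ (a:ℝ) * p := mul_le_mul_of_nonneg_right halb hp
    have h2 : (n:ℝ)/2048 * p * q ≤ (a:ℝ) * p * q := mul_le_mul_of_nonneg_right h1 hq0
    have h3 : (0:ℝ) ≤ ((n:ℝ)*p - 4096) * (q - 1/2) :=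
      mul_nonneg (by linarith) (by linarith)
    have hv : 1 ≤ (a:ℝ)*p*q := by nlinarith [h2, h3, hq2, hM]
    have hkey : (n:ℝ)*p ≤ 4096 * ((a:ℝ)*p*q) := by
      nlinarith [h2, hq2, hnp0, mul_nonneg hnp0 (by linarith : (0:ℝ) ≤ 2*q - 1)]
    have hsle : s ≤ Real.sqrt ((a:ℝ)*p*q) / 8 := by
      have h64 : Real.sqrt ((n:ℝ)*p) ≤ 64 * Real.sqrt ((a:ℝ)*p*q) := by
        have h1 : Real.sqrt ((n:ℝ)*p) ≤ Real.sqrt (4096 * ((a:ℝ)*p*q)) :=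
          Real.sqrt_le_sqrt hkey
        have h2 : Real.sqrt (4096 * ((a:ℝ)*p*q)) = 64 * Real.sqrt ((a:ℝ)*p*q) := by
          rw [Real.sqrt_mul (by norm_num : (0:ℝ) ≤ 4096),
            show (4096:ℝ) = 64^2 by norm_num, Real.sqrt_sq (by norm_num : (0:ℝ) ≤ 64)]
        linarith
      rw [hs]; linarith [h64, Real.sqrt_nonneg ((a:ℝ)*p*q)]
    have hbase := base p q hp hq0 hpq a hv
    have hsub : (range (a+1)).filter
          (fun k : ℕ => (k:ℝ) ≤ (a:ℝ)*p - Real.sqrt ((a:ℝ)*p*q) / 8)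
        ⊆ (range (a+1)).filter (fun k : ℕ => (k:ℝ) ≤ (a:ℝ)*p - s) := by
      intro k hk
      obtain ⟨hk1, hk2⟩ := mem_filter.mp hk
      exact mem_filter.mpr ⟨hk1, by linarith⟩
    calc (1:ℝ)/64 ≤ _ := hbase
      _ ≤ _ := Finset.sum_le_sum_of_subset_of_nonneg hsub fun k _ _ => by positivity
  have hiter := iterlem p q hp hq0 (1/64) s (by norm_num) L hchunk
  rw [hlen, hsum] at hiter
  have hthr : ((1024:ℕ):ℝ) * s = Real.sqrt ((n:ℝ)*p) := by
    rw [hs]; push_cast; ring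
  rw [hthr] at hiter
  exact hiter
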